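/- Let p/q be a positive irreducible fraction with p even, and let r/s and r'/s' be two distinct children of p/q. Then T(r/s) ⊆ T(p/q), p/q ∉ T(r/s), and T(r/s) ∩ T(r'/s') = ∅. -/

import Mathlib

/-- Evaluate the continued fraction `[a_0, …, a_{n-1}, x]` projectively:
the pair `(u, w)` represents the fraction `u/w` (with `(±1, 0)` representing
`∞`), and `[a, rest] = a + 1/rest` corresponds to `(u,w) ↦ (a*u + w, u)`. -/
def cfFold (l : List ℤ) (x : ℤ × ℤ) : ℤ × ℤ :=
  l.foldr (fun a y => (a * y.1 + y.2, y.1)) x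

/-- The coprime pair `(numerator, denominator)` of the continued fraction
`[a_0, …, a_n]`; the empty continued fraction is `∞ = (1, 0)`. -/
def cfPair (l : List ℤ) : ℤ × ℤ :=
  cfFold l (1, 0)

/-- The rational number represented by a pair. -/
def pairQ (x : ℤ × ℤ) : ℚ :=
  (x.1 : ℚ) / (x.2 : ℚ)

/-- The value of the continued fraction `[a_0, …, a_n]` as a rational number. -/
def cfVal (l : List ℤ) : ℚ :=
  pairQ (cfPair l)

/-- `l = [a_0, …, a_n]` is a standard continued fraction expansion:
`a_0 ≥ 0`, `a_i ≥ 1` for `1 ≤ i ≤ n`, and `a_n ≥ 2`. -/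
def IsStdCF (l : List ℤ) : Prop :=
  l ≠ [] ∧ 0 ≤ l.head! ∧ (∀ b ∈ l.tail, 1 ≤ b) ∧ 2 ≤ l.getLast!

/-- The coprime-up-to-sign pair representing the continued fraction
`[a_0, …, a_{n-1}, a_n + 2/t]` with rational last entry
`a + 2/t = (a*t + 2)/t` (for odd `t` the pair `(a*t + 2, t)` is coprime). -/
def childPair (l : List ℤ) (a t : ℤ) : ℤ × ℤ :=
  cfFold l (a * t + 2, t)

/-- The open interval of rationals between the fractions represented by the
pairs `P` and `Q` (ordered appropriately); if one endpoint is `∞`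
(denominator `0`), the interval is unbounded above. -/
def pairItv (P Q : ℤ × ℤ) : Set ℚ :=
  if P.2 = 0 then Set.Ioi (pairQ Q)
  else if Q.2 = 0 then Set.Ioi (pairQ P)
  else Set.Ioo (min (pairQ P) (pairQ Q)) (max (pairQ P) (pairQ Q))

/-- The territory `T(p/q)` of a fraction with standard continued fraction
expansion `l ++ [a]`: the open interval with endpoints
`[a_0, …, a_{n-1}, a_n - 1]` and `[a_0, …, a_{n-1}, ∞] = [a_0, …, a_{n-1}]`. -/
def territory (l : List ℤ) (a : ℤ) : Set ℚ :=
  pairItv (cfFold l (a - 1, 1)) (cfPair l)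

/-- The territory of the child `[a_0, …, a_{n-1}, a_n + 2/t]` of
`l ++ [a]`: the open interval with endpoints
`[a_0, …, a_{n-1}, a_n + 2/(t+1)]` and `[a_0, …, a_{n-1}, a_n + 2/(t-1)]`. -/
def childTerritory (l : List ℤ) (a t : ℤ) : Set ℚ :=
  pairItv (cfFold l (a * (t + 1) + 2, t + 1)) (cfFold l (a * (t - 1) + 2, t - 1))

section Helpers

lemma getLast!_concat' (a : ℤ) : ∀ (l : List ℤ), (l ++ [a]).getLast! = a
  | [] => rfl
  | [b] => rfl
  | b :: c :: l => by
      have ih := getLast!_concat' a (c :: l)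
      rw [List.cons_append]
      rw [show ((b :: (c :: l ++ [a])).getLast! = (c :: l ++ [a]).getLast!) from ?_]
      · exact ih
      · rcases l with _ | ⟨d, l⟩ <;> rfl

lemma succ_mul_nonneg (k : ℤ) : 0 ≤ k * (k + 1) := by
  rcases le_or_gt 0 k with h | h
  · nlinarith
  · nlinarith

lemma even_s_mul (s : ℤ) (h : Even s) : 0 ≤ s * (s + 2) := by
  obtain ⟨k, rfl⟩ := h
  have := succ_mul_nonneg k
  nlinarith

lemma odd_even_sub_one {τ : ℤ} (h : Odd τ) : Even (τ - 1) := by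
  obtain ⟨k, rfl⟩ := h
  exact ⟨k, by ring⟩

lemma odd_even_add_one {τ : ℤ} (h : Odd τ) : Even (τ + 1) := by
  obtain ⟨k, rfl⟩ := h
  exact ⟨k + 1, by ring⟩

end Helpers

lemma cfFold_lin (l : List ℤ) (u w : ℤ) :
    cfFold l (u, w) = (u * (cfPair l).1 + w * (cfFold l (0,1)).1,
                       u * (cfPair l).2 + w * (cfFold l (0,1)).2) := by
  induction l with
  | nil => simp [cfFold, cfPair]
  | cons b l ih =>
      simp only [cfFold, cfPair, List.foldr_cons] at *
      rw [ih]
      simp only [Prod.mk.injEq]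
      exact ⟨by ring, trivial⟩

lemma cfFold_det (l : List ℤ) :
    (cfPair l).1 * (cfFold l (0,1)).2 - (cfFold l (0,1)).1 * (cfPair l).2
      = (-1)^l.length := by
  induction l with
  | nil => simp [cfFold, cfPair]
  | cons b l ih =>
      simp only [cfFold, cfPair, List.foldr_cons] at *
      rw [List.length_cons, pow_succ]
      linear_combination (-1 : ℤ) * ih

lemma cfFold_pos (l : List ℤ) (hne : l ≠ []) (h1 : ∀ b ∈ l, 1 ≤ b) :
    1 ≤ (cfPair l).1 ∧ (cfPair l).2 ≤ (cfPair l).1 ∧ 0 ≤ (cfPair l).2 ∧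
    0 ≤ (cfFold l (0,1)).2 ∧ (cfFold l (0,1)).2 ≤ (cfFold l (0,1)).1 := by
  induction l with
  | nil => simp at hne
  | cons b l ih =>
      rcases eq_or_ne l [] with rfl | hl
      · have hb : 1 ≤ b := h1 b (by simp)
        simp [cfFold, cfPair]
        omega
      · have hb : 1 ≤ b := h1 b (by simp)
        have ih' := ih hl (fun c hc => h1 c (by simp [hc]))
        simp only [cfFold, cfPair, List.foldr_cons] at *
        obtain ⟨hA, hCA, hC, hD, hDB⟩ := ih'
        refine ⟨?_, ?_, ?_, ?_, ?_⟩ <;> nlinarith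

lemma int_div_sign (n d : ℤ) (hd : d ≠ 0) :
    ((n:ℚ)/(d:ℚ) < 0 ↔ n*d < 0) ∧ ((n:ℚ)/(d:ℚ) ≤ 0 ↔ n*d ≤ 0) := by
  have hd' : (d:ℚ) ≠ 0 := Int.cast_ne_zero.mpr hd
  have h2 : (0:ℚ) < (d:ℚ)^2 := by positivity
  have he : (n:ℚ)/(d:ℚ) = ((n*d : ℤ):ℚ)/((d:ℚ)^2) := by
    push_cast
    rw [pow_two, mul_div_mul_right _ _ hd']
  constructor
  · rw [he, div_lt_iff₀ h2, zero_mul]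
    exact_mod_cast Iff.rfl
  · rw [he, div_le_iff₀ h2, zero_mul]
    exact_mod_cast Iff.rfl

lemma diffQ (A B C D u w u' w' : ℤ) (hd : u*C + w*D ≠ 0) (hd' : u'*C + w'*D ≠ 0) :
    ((u'*A + w'*B : ℤ):ℚ)/((u'*C + w'*D : ℤ):ℚ) - ((u*A + w*B : ℤ):ℚ)/((u*C + w*D : ℤ):ℚ)
      = (((A*D - B*C) * (u'*w - u*w') : ℤ):ℚ)/(((u*C + w*D)*(u'*C + w'*D) : ℤ):ℚ) := by
  have h1 : ((u*C + w*D : ℤ):ℚ) ≠ 0 := Int.cast_ne_zero.mpr hd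
  have h2 : ((u'*C + w'*D : ℤ):ℚ) ≠ 0 := Int.cast_ne_zero.mpr hd'
  push_cast at *
  rw [div_sub_div _ _ h2 h1]
  congr 1 <;> ring

lemma mem_Ioo_minmax (p q x : ℚ) :
    x ∈ Set.Ioo (min p q) (max p q) ↔ (x - p)*(x - q) < 0 := by
  rcases le_total p q with h | h
  · rw [min_eq_left h, max_eq_right h, Set.mem_Ioo]
    constructor
    · rintro ⟨h1, h2⟩; nlinarith
    · intro h0; constructor <;> nlinarith
  · rw [min_eq_right h, max_eq_left h, Set.mem_Ioo]
    constructor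
    · rintro ⟨h1, h2⟩; nlinarith
    · intro h0; constructor <;> nlinarith

lemma mem_Icc_prod (p q x : ℚ) :
    (x - p)*(x - q) ≤ 0 ↔ min p q ≤ x ∧ x ≤ max p q := by
  rcases le_total p q with h | h
  · rw [min_eq_left h, max_eq_right h]
    constructor
    · intro h0; constructor <;> nlinarith
    · rintro ⟨h1, h2⟩; nlinarith
  · rw [min_eq_right h, max_eq_left h]
    constructor
    · intro h0; constructor <;> nlinarith
    · rintro ⟨h1, h2⟩; nlinarith

lemma Ioo_subset_minmax (p q P Q : ℚ) (h1 : (p - P)*(p - Q) ≤ 0) (h2 : (q - P)*(q - Q) ≤ 0) :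
    Set.Ioo (min p q) (max p q) ⊆ Set.Ioo (min P Q) (max P Q) := by
  obtain ⟨hp1, hp2⟩ := (mem_Icc_prod P Q p).mp h1
  obtain ⟨hq1, hq2⟩ := (mem_Icc_prod P Q q).mp h2
  rintro x ⟨hx1, hx2⟩
  exact ⟨lt_of_le_of_lt (le_min hp1 hq1) hx1, lt_of_lt_of_le hx2 (max_le hp2 hq2)⟩

lemma Ioo_disjoint_sep (p q P Q c : ℚ) (h11 : (p - c)*(P - c) ≤ 0) (h12 : (p - c)*(Q - c) ≤ 0)
    (h21 : (q - c)*(P - c) ≤ 0) (h22 : (q - c)*(Q - c) ≤ 0) :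
    Set.Ioo (min p q) (max p q) ∩ Set.Ioo (min P Q) (max P Q) = ∅ := by
  apply Set.eq_empty_iff_forall_notMem.mpr
  rintro x ⟨hx1, hx2⟩
  rw [Set.mem_Ioo] at hx1 hx2
  obtain ⟨ha1, ha2⟩ := hx1
  obtain ⟨hb1, hb2⟩ := hx2
  rcases lt_trichotomy x c with hc | hc | hc
  · rcases min_lt_iff.mp (lt_trans hb1 hc) with hP | hQ
    · have hcp : c ≤ p := by nlinarith
      have hcq : c ≤ q := by nlinarith
      have := le_min hcp hcq
      linarith
    · have hcp : c ≤ p := by nlinarith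
      have hcq : c ≤ q := by nlinarith
      have := le_min hcp hcq
      linarith
  · subst hc
    rcases min_lt_iff.mp ha1 with hp | hq
    · have h1 : x ≤ P := by nlinarith
      have h2 : x ≤ Q := by nlinarith
      have := le_min h1 h2
      linarith
    · have h1 : x ≤ P := by nlinarith
      have h2 : x ≤ Q := by nlinarith
      have := le_min h1 h2
      linarith
  · rcases lt_max_iff.mp (lt_trans hc ha2) with hp | hq
    · have h1 : P ≤ c := by nlinarith
      have h2 : Q ≤ c := by nlinarith
      have := max_le h1 h2
      linarith
    · have h1 : P ≤ c := by nlinarith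
      have h2 : Q ≤ c := by nlinarith
      have := max_le h1 h2
      linarith

lemma prodQ (A B C D : ℤ) (n : ℕ) (hdet : A*D - B*C = (-1)^n)
    (u w u1 w1 u2 w2 : ℤ) (hd : u*C + w*D ≠ 0) (hd1 : u1*C + w1*D ≠ 0) (hd2 : u2*C + w2*D ≠ 0) :
    ((((u*A + w*B : ℤ):ℚ)/((u*C + w*D : ℤ):ℚ) - ((u1*A + w1*B : ℤ):ℚ)/((u1*C + w1*D : ℤ):ℚ)) *
     (((u*A + w*B : ℤ):ℚ)/((u*C + w*D : ℤ):ℚ) - ((u2*A + w2*B : ℤ):ℚ)/((u2*C + w2*D : ℤ):ℚ)) < 0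
       ↔ (u*w1 - u1*w) * (u*w2 - u2*w) * ((u1*C + w1*D) * (u2*C + w2*D)) < 0) ∧
    ((((u*A + w*B : ℤ):ℚ)/((u*C + w*D : ℤ):ℚ) - ((u1*A + w1*B : ℤ):ℚ)/((u1*C + w1*D : ℤ):ℚ)) *
     (((u*A + w*B : ℤ):ℚ)/((u*C + w*D : ℤ):ℚ) - ((u2*A + w2*B : ℤ):ℚ)/((u2*C + w2*D : ℤ):ℚ)) ≤ 0
       ↔ (u*w1 - u1*w) * (u*w2 - u2*w) * ((u1*C + w1*D) * (u2*C + w2*D)) ≤ 0) := by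
  have h1 := diffQ A B C D u1 w1 u w hd1 hd
  have h2 := diffQ A B C D u2 w2 u w hd2 hd
  rw [hdet] at h1 h2
  have hsq : ((-1:ℤ)^n) * ((-1:ℤ)^n) = 1 := by
    rw [← pow_add]
    exact Even.neg_one_pow ⟨n, rfl⟩
  have hprod : (((u*A + w*B : ℤ):ℚ)/((u*C + w*D : ℤ):ℚ) - ((u1*A + w1*B : ℤ):ℚ)/((u1*C + w1*D : ℤ):ℚ)) *
      (((u*A + w*B : ℤ):ℚ)/((u*C + w*D : ℤ):ℚ) - ((u2*A + w2*B : ℤ):ℚ)/((u2*C + w2*D : ℤ):ℚ))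
      = (((u*w1 - u1*w) * (u*w2 - u2*w) : ℤ):ℚ) /
        ((((u1*C + w1*D) * (u*C + w*D)) * ((u2*C + w2*D) * (u*C + w*D)) : ℤ):ℚ) := by
    rw [h1, h2, div_mul_div_comm, ← Int.cast_mul, ← Int.cast_mul,
      show ((-1:ℤ)^n*(u*w1-u1*w))*((-1:ℤ)^n*(u*w2-u2*w)) = (u*w1-u1*w)*(u*w2-u2*w) from by
        rw [mul_mul_mul_comm, hsq, one_mul]]
  have hden : ((u1*C + w1*D) * (u*C + w*D)) * ((u2*C + w2*D) * (u*C + w*D)) ≠ 0 :=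
    mul_ne_zero (mul_ne_zero hd1 hd) (mul_ne_zero hd2 hd)
  obtain ⟨hlt, hle⟩ := int_div_sign ((u*w1 - u1*w) * (u*w2 - u2*w))
    (((u1*C + w1*D) * (u*C + w*D)) * ((u2*C + w2*D) * (u*C + w*D))) hden
  have hdd : 0 < (u*C + w*D) * (u*C + w*D) := mul_self_pos.mpr hd
  have hkey : ∀ X : ℤ, (X * (((u1*C + w1*D) * (u*C + w*D)) * ((u2*C + w2*D) * (u*C + w*D))) < 0
        ↔ X * ((u1*C + w1*D) * (u2*C + w2*D)) < 0) ∧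
      (X * (((u1*C + w1*D) * (u*C + w*D)) * ((u2*C + w2*D) * (u*C + w*D))) ≤ 0
        ↔ X * ((u1*C + w1*D) * (u2*C + w2*D)) ≤ 0) := by
    intro X
    rw [show X * (((u1*C + w1*D) * (u*C + w*D)) * ((u2*C + w2*D) * (u*C + w*D)))
        = (X * ((u1*C + w1*D) * (u2*C + w2*D))) * ((u*C + w*D) * (u*C + w*D)) from by ring]
    constructor
    · constructor
      · intro h; by_contra h'; push_neg at h'; nlinarith
      · intro h; exact mul_neg_of_neg_of_pos h hdd
    · constructor
      · intro h; by_contra h'; push_neg at h'; nlinarith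
      · intro h; exact mul_nonpos_iff.mpr (Or.inr ⟨h, hdd.le⟩)
  obtain ⟨hk1, hk2⟩ := hkey ((u*w1 - u1*w) * (u*w2 - u2*w))
  constructor
  · rw [hprod, hlt, hk1]
  · rw [hprod, hle, hk2]

lemma prodQ0 (u w u1 w1 u2 w2 : ℤ) (hw : w ≠ 0) (h1 : w1 ≠ 0) (h2 : w2 ≠ 0) :
    (((u:ℚ)/(w:ℚ) - (u1:ℚ)/(w1:ℚ)) * ((u:ℚ)/(w:ℚ) - (u2:ℚ)/(w2:ℚ)) < 0
       ↔ (u*w1 - u1*w) * (u*w2 - u2*w) * (w1 * w2) < 0) ∧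
    (((u:ℚ)/(w:ℚ) - (u1:ℚ)/(w1:ℚ)) * ((u:ℚ)/(w:ℚ) - (u2:ℚ)/(w2:ℚ)) ≤ 0
       ↔ (u*w1 - u1*w) * (u*w2 - u2*w) * (w1 * w2) ≤ 0) := by
  have h := prodQ 1 0 0 1 0 (by norm_num) u w u1 w1 u2 w2 (by simpa) (by simpa) (by simpa)
  simpa using h

set_option maxHeartbeats 1600000 in
/-- Let `p/q` be a positive irreducible fraction with `p` even and standard
continued fraction expansion `l ++ [a]`, and let `t, t'` be parameters of two
distinct children of `p/q` (odd integers `≠ -1`).  Then the territory of the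
child lies inside the territory of `p/q`, `p/q` is not in the child's
territory, and the territories of the two distinct children are disjoint. -/
theorem child_territories (p q : ℤ) (hp : 0 < p) (hq : 0 < q)
    (hco : Int.gcd p q = 1) (hev : 2 ∣ p)
    (l : List ℤ) (a : ℤ) (hstd : IsStdCF (l ++ [a]))
    (hval : cfPair (l ++ [a]) = (p, q))
    (t t' : ℤ) (ht : Odd t) (ht1 : t ≠ -1) (ht' : Odd t') (ht'1 : t' ≠ -1)
    (hne : t ≠ t') :
    childTerritory l a t ⊆ territory l a ∧
    (p : ℚ) / q ∉ childTerritory l a t ∧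
    childTerritory l a t ∩ childTerritory l a t' = ∅ := by
  obtain ⟨-, hhead, htail, hlast⟩ := hstd
  have ha : 2 ≤ a := by rwa [getLast!_concat' a l] at hlast
  obtain ⟨⟨A, C⟩, hAC⟩ : ∃ x, cfPair l = x := ⟨_, rfl⟩
  obtain ⟨⟨B, D⟩, hBD⟩ : ∃ x, cfFold l (0,1) = x := ⟨_, rfl⟩
  have hlin : ∀ u w : ℤ, cfFold l (u, w) = (u*A + w*B, u*C + w*D) := by
    intro u w
    rw [cfFold_lin l u w, hAC, hBD]
  have hdet : A*D - B*C = (-1)^l.length := by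
    have h := cfFold_det l
    rwa [hAC, hBD] at h
  have hv : cfFold l (a, 1) = (p, q) := by
    rw [← hval]
    show cfFold l (a, 1) = cfPair (l ++ [a])
    simp [cfPair, cfFold]
  have hpq : p = a*A + 1*B ∧ q = a*C + 1*D := by
    have h := hv
    rw [hlin] at h
    injection h with h1 h2
    exact ⟨h1.symm, h2.symm⟩
  have hpairQ : ∀ u w : ℤ, pairQ (cfFold l (u,w)) = ((u*A + w*B : ℤ):ℚ)/((u*C + w*D : ℤ):ℚ) := by
    intro u w
    rw [hlin]
    rfl
  have hsign : 0 ≤ C ∧ 0 ≤ D ∧ (l ≠ [] → 1 ≤ C) := by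
    rcases l with _ | ⟨b, l'⟩
    · simp [cfPair, cfFold, Prod.ext_iff] at hAC hBD
      exact ⟨by omega, by omega, fun h => absurd rfl h⟩
    · have hmem : ∀ x ∈ l', 1 ≤ x := by
        intro x hx
        exact htail x (by simp [hx])
      have hCv : (b * (cfPair l').1 + (cfPair l').2, (cfPair l').1) = (A, C) := by
        rw [← hAC]; simp [cfPair, cfFold]
      have hDv : (b * (cfFold l' (0,1)).1 + (cfFold l' (0,1)).2, (cfFold l' (0,1)).1) = (B, D) := by
        rw [← hBD]; simp [cfFold]
      injection hCv with hA1 hC1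
      injection hDv with hB1 hD1
      rcases eq_or_ne l' [] with rfl | hl'
      · simp [cfPair, cfFold] at hC1 hD1
        exact ⟨by omega, by omega, fun _ => by omega⟩
      · obtain ⟨h1, h2, h3, h4, h5⟩ := cfFold_pos l' hl' hmem
        refine ⟨by omega, by omega, fun _ => by omega⟩
  obtain ⟨hC0, hD0, hCne⟩ := hsign
  rcases eq_or_ne l [] with rfl | hl
  · -- l = [] : direct case
    have hpa : (a, (1:ℤ)) = (p, q) := hv
    injection hpa with hp1 hq1
    subst hp1
    subst hq1
    have hterr0 : territory [] a = Set.Ioi ((a:ℚ) - 1) := by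
      rw [territory, pairItv]
      norm_num [cfPair, cfFold, pairQ]
    have hch1 : childTerritory [] a 1 = Set.Ioi ((a:ℚ) + 1) := by
      rw [childTerritory, pairItv]
      norm_num [cfFold, pairQ]
      rw [show ((a:ℚ) * 2 + 2)/2 = (a:ℚ) + 1 from by ring]
    have hchEq0 : ∀ τ : ℤ, τ + 1 ≠ 0 → τ - 1 ≠ 0 → childTerritory [] a τ =
        Set.Ioo (min (((a*(τ+1)+2 : ℤ):ℚ)/((τ+1 : ℤ):ℚ)) (((a*(τ-1)+2 : ℤ):ℚ)/((τ-1 : ℤ):ℚ)))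
                (max (((a*(τ+1)+2 : ℤ):ℚ)/((τ+1 : ℤ):ℚ)) (((a*(τ-1)+2 : ℤ):ℚ)/((τ-1 : ℤ):ℚ))) := by
      intro τ h1 h2
      rw [childTerritory]
      show pairItv (a*(τ+1)+2, τ+1) (a*(τ-1)+2, τ-1) = _
      rw [pairItv, if_neg (by simpa using h1), if_neg (by simpa using h2)]
      rfl
    have hzlb : ∀ s : ℤ, Even s → s ≠ 0 → ((a:ℚ) - 1) ≤ ((a*s+2 : ℤ):ℚ)/((s : ℤ):ℚ) := by
      intro s hs h0
      have h2 : 2 ≤ s ∨ s ≤ -2 := by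
        obtain ⟨k, rfl⟩ := hs
        omega
      rcases h2 with h | h
      · have hsp : (0:ℚ) < ((s:ℤ):ℚ) := by exact_mod_cast (by omega : (0:ℤ) < s)
        rw [le_div_iff₀ hsp]
        have hsc : (2:ℚ) ≤ (s:ℚ) := by exact_mod_cast h
        push_cast
        nlinarith
      · have hsn : ((s:ℤ):ℚ) < 0 := by exact_mod_cast (by omega : s < (0:ℤ))
        rw [le_div_iff_of_neg hsn]
        have hsc : (s:ℚ) ≤ -2 := by exact_mod_cast h
        push_cast
        nlinarith
    have hzub : ∀ s : ℤ, Even s → s ≠ 0 → ((a*s+2 : ℤ):ℚ)/((s : ℤ):ℚ) ≤ (a:ℚ) + 1 := by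
      intro s hs h0
      have h2 : 2 ≤ s ∨ s ≤ -2 := by
        obtain ⟨k, rfl⟩ := hs
        omega
      rcases h2 with h | h
      · have hsp : (0:ℚ) < ((s:ℤ):ℚ) := by exact_mod_cast (by omega : (0:ℤ) < s)
        rw [div_le_iff₀ hsp]
        have hsc : (2:ℚ) ≤ (s:ℚ) := by exact_mod_cast h
        push_cast
        nlinarith
      · have hsn : ((s:ℤ):ℚ) < 0 := by exact_mod_cast (by omega : s < (0:ℤ))
        rw [div_le_iff_of_neg hsn]
        have hsc : (s:ℚ) ≤ -2 := by exact_mod_cast h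
        push_cast
        nlinarith
    refine ⟨?_, ?_, ?_⟩
    · -- subset
      rw [hterr0]
      rcases eq_or_ne t 1 with rfl | htne
      · rw [hch1]
        exact Set.Ioi_subset_Ioi (by linarith)
      · have h1 : t + 1 ≠ 0 := by omega
        have h2 : t - 1 ≠ 0 := by omega
        rw [hchEq0 t h1 h2]
        rintro x ⟨hx1, hx2⟩
        exact lt_of_le_of_lt
          (le_min (hzlb (t+1) (odd_even_add_one ht) h1) (hzlb (t-1) (odd_even_sub_one ht) h2)) hx1
    · -- not mem
      rcases eq_or_ne t 1 with rfl | htne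
      · rw [hch1]
        intro hmem
        rw [Set.mem_Ioi] at hmem
        have : ((a:ℤ):ℚ)/((1:ℤ):ℚ) = (a:ℚ) := by norm_num
        rw [this] at hmem
        linarith
      · have h1 : t + 1 ≠ 0 := by omega
        have h2 : t - 1 ≠ 0 := by omega
        rw [hchEq0 t h1 h2]
        intro hmem
        rw [mem_Ioo_minmax] at hmem
        have hkey := (prodQ0 a 1 (a*(t+1)+2) (t+1) (a*(t-1)+2) (t-1)
          (by norm_num) h1 h2).1.mp hmem
        obtain ⟨k, rfl⟩ := ht
        nlinarith [succ_mul_nonneg k]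
    · -- disjoint
      have hstep0 : ∀ t1 t2 : ℤ, Odd t1 → t1 ≠ -1 → t1 ≠ 1 → Odd t2 → t2 ≠ -1 → t2 ≠ 1 →
          t1 < t2 → childTerritory [] a t1 ∩ childTerritory [] a t2 = ∅ := by
        intro t1 t2 ho1 hn1 hs1x ho2 hn2 hs2x h12
        have ha1 : t1 + 1 ≠ 0 := by omega
        have hb1 : t1 - 1 ≠ 0 := by omega
        have ha2 : t2 + 1 ≠ 0 := by omega
        have hb2 : t2 - 1 ≠ 0 := by omega
        have hgap : t1 + 2 ≤ t2 := by
          obtain ⟨k1, rfl⟩ := ho1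
          obtain ⟨k2, rfl⟩ := ho2
          omega
        rw [hchEq0 t1 ha1 hb1, hchEq0 t2 ha2 hb2]
        by_cases hmix : t1 ≤ -3 ∧ 1 ≤ t2
        · have hmain : ∀ s1 s2 : ℤ, s1 ≠ 0 → s2 ≠ 0 → s1 ≤ -2 → 0 ≤ s2 →
              (((a*s1+2 : ℤ):ℚ)/((s1:ℤ):ℚ) - ((a:ℤ):ℚ)/((1:ℤ):ℚ)) *
              (((a*s2+2 : ℤ):ℚ)/((s2:ℤ):ℚ) - ((a:ℤ):ℚ)/((1:ℤ):ℚ)) ≤ 0 := by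
            intro s1 s2 he1 he2 hs1 hs2
            have key := (prodQ0 a 1 (a*s1+2) s1 (a*s2+2) s2 (by norm_num) he1 he2).2.mpr ?_
            · nlinarith [key]
            · have hs2' : 1 ≤ s2 := by omega
              nlinarith
          refine Ioo_disjoint_sep _ _ _ _ (((a:ℤ):ℚ)/((1:ℤ):ℚ)) ?_ ?_ ?_ ?_
          · exact hmain (t1+1) (t2+1) ha1 ha2 (by omega) (by omega)
          · exact hmain (t1+1) (t2-1) ha1 hb2 (by omega) (by omega)
          · exact hmain (t1-1) (t2+1) hb1 ha2 (by omega) (by omega)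
          · exact hmain (t1-1) (t2-1) hb1 hb2 (by omega) (by omega)
        · have hsame : (1 ≤ t1 ∧ 1 ≤ t2) ∨ (t1 ≤ -3 ∧ t2 ≤ -3) := by
            have h1s : 1 ≤ t1 ∨ t1 ≤ -3 := by
              obtain ⟨k, rfl⟩ := ho1
              omega
            have h2s : 1 ≤ t2 ∨ t2 ≤ -3 := by
              obtain ⟨k, rfl⟩ := ho2
              omega
            rcases h1s with h1s | h1s <;> rcases h2s with h2s | h2s
            · exact Or.inl ⟨h1s, h2s⟩
            · omega
            · exact absurd ⟨h1s, h2s⟩ hmix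
            · exact Or.inr ⟨h1s, h2s⟩
          have hmain2 : ∀ s' : ℤ, s' ≠ 0 → (t2 - 1 ≤ s') → s' ≤ t2 + 1 →
              (((a*(t1-1)+2 : ℤ):ℚ)/((t1-1 : ℤ):ℚ) - ((a*(t1+1)+2 : ℤ):ℚ)/((t1+1 : ℤ):ℚ)) *
              (((a*s'+2 : ℤ):ℚ)/((s' : ℤ):ℚ) - ((a*(t1+1)+2 : ℤ):ℚ)/((t1+1 : ℤ):ℚ)) ≤ 0 := by
            intro s' he' hlo hhi
            have key := (prodQ0 (a*(t1+1)+2) (t1+1) (a*(t1-1)+2) (t1-1) (a*s'+2) s'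
              ha1 hb1 he').2.mpr ?_
            · nlinarith [key]
            · have hge : 0 ≤ s' - t1 - 1 := by omega
              have hdp : 0 < (t1-1) * s' := by
                rcases hsame with ⟨hc1, hc2⟩ | ⟨hc1, hc2⟩
                · exact mul_pos (by omega) (by omega)
                · exact mul_pos_of_neg_of_neg (by omega) (by omega)
              nlinarith [mul_nonneg hge hdp.le]
          refine Ioo_disjoint_sep _ _ _ _ (((a*(t1+1)+2 : ℤ):ℚ)/((t1+1 : ℤ):ℚ)) ?_ ?_ ?_ ?_
          · rw [sub_self, zero_mul]
          · rw [sub_self, zero_mul]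
          · exact hmain2 (t2+1) ha2 (by omega) (by omega)
          · exact hmain2 (t2-1) hb2 (by omega) (by omega)
      rcases eq_or_ne t 1 with rfl | htne
      · have h1' : t' + 1 ≠ 0 := by omega
        have h2' : t' - 1 ≠ 0 := by omega
        have htne' : t' ≠ 1 := fun h => hne h.symm
        rw [hch1, hchEq0 t' h1' h2']
        apply Set.eq_empty_iff_forall_notMem.mpr
        rintro x ⟨hx1, hx2⟩
        rw [Set.mem_Ioi] at hx1
        have hub := max_le (hzub (t'+1) (odd_even_add_one ht') h1')
          (hzub (t'-1) (odd_even_sub_one ht') h2')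
        have := hx2.2
        linarith
      · rcases eq_or_ne t' 1 with rfl | htne'
        · have h1 : t + 1 ≠ 0 := by omega
          have h2 : t - 1 ≠ 0 := by omega
          rw [hch1, hchEq0 t h1 h2]
          apply Set.eq_empty_iff_forall_notMem.mpr
          rintro x ⟨hx1, hx2⟩
          rw [Set.mem_Ioi] at hx2
          have hub := max_le (hzub (t+1) (odd_even_add_one ht) h1)
            (hzub (t-1) (odd_even_sub_one ht) h2)
          have := hx1.2
          linarith
        · rcases lt_or_gt_of_ne hne with h | h
          · exact hstep0 t t' ht ht1 htne ht' ht'1 htne' h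
          · rw [Set.inter_comm]
            exact hstep0 t' t ht' ht'1 htne' ht ht1 htne h
  · -- l ≠ []
    have hC1 : 1 ≤ C := hCne hl
    have hq' : q = a*C + 1*D := hpq.2
    have hdXid : ∀ s : ℤ, (a*s+2)*C + s*D = s*q + 2*C := by
      intro s
      rw [hq']
      ring
    have hdXpos : ∀ s : ℤ, 0 ≤ s → 0 < (a*s+2)*C + s*D := by
      intro s hs
      rw [hdXid]
      nlinarith
    have hdXneg : ∀ s : ℤ, s ≤ -2 → (a*s+2)*C + s*D < 0 := by
      intro s hs
      rw [hdXid]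
      nlinarith
    have hdXne : ∀ s : ℤ, Even s → (a*s+2)*C + s*D ≠ 0 := by
      intro s hs
      rcases le_or_gt 0 s with h | h
      · exact (hdXpos s h).ne'
      · have h2 : s ≤ -2 := by
          obtain ⟨k, rfl⟩ := hs
          omega
        exact (hdXneg s h2).ne
    have hdP1 : 0 < (a-1)*C + 1*D := by nlinarith
    have hdP2 : (1*C + 0*D) ≠ 0 := by
      simp only [one_mul, zero_mul, add_zero]
      omega
    have hdv : a*C + 1*D ≠ 0 := by
      rw [← hq']
      exact hq.ne'
    have hterr : territory l a =
        Set.Ioo (min (pairQ (cfFold l (a-1,1))) (pairQ (cfFold l (1,0))))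
                (max (pairQ (cfFold l (a-1,1))) (pairQ (cfFold l (1,0)))) := by
      rw [territory, show cfPair l = cfFold l (1,0) from rfl, pairItv,
        if_neg (by rw [hlin]; exact fun h => hdP1.ne' h),
        if_neg (by rw [hlin]; exact hdP2)]
    have hchildEq : ∀ τ : ℤ, Odd τ → childTerritory l a τ =
        Set.Ioo (min (pairQ (cfFold l (a*(τ+1)+2, τ+1))) (pairQ (cfFold l (a*(τ-1)+2, τ-1))))
                (max (pairQ (cfFold l (a*(τ+1)+2, τ+1))) (pairQ (cfFold l (a*(τ-1)+2, τ-1)))) := by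
      intro τ hτ
      rw [childTerritory, pairItv,
        if_neg (by rw [hlin]; exact hdXne (τ+1) (odd_even_add_one hτ)),
        if_neg (by rw [hlin]; exact hdXne (τ-1) (odd_even_sub_one hτ))]
    refine ⟨?_, ?_, ?_⟩
    · -- subset
      rw [hterr, hchildEq t ht]
      have hsub : ∀ s : ℤ, Even s →
          (pairQ (cfFold l (a*s+2, s)) - pairQ (cfFold l (a-1,1))) *
          (pairQ (cfFold l (a*s+2, s)) - pairQ (cfFold l (1,0))) ≤ 0 := by
        intro s hs
        simp only [hpairQ]
        refine (prodQ A B C D l.length hdet (a*s+2) s (a-1) 1 1 0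
          (hdXne s hs) hdP1.ne' hdP2).2.mpr ?_
        have h1 := even_s_mul s hs
        have h2 : (0:ℤ) < 1*C + 0*D := by omega
        nlinarith [mul_nonneg h1 (mul_pos hdP1 h2).le]
      exact Ioo_subset_minmax _ _ _ _ (hsub (t+1) (odd_even_add_one ht))
        (hsub (t-1) (odd_even_sub_one ht))
    · -- p/q not in child territory
      rw [hchildEq t ht]
      have hvQ : (p:ℚ)/(q:ℚ) = pairQ (cfFold l (a, 1)) := by rw [hv]; rfl
      rw [hvQ]
      intro hmem
      rw [mem_Ioo_minmax] at hmem
      simp only [hpairQ] at hmem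
      have h2 := (prodQ A B C D l.length hdet a 1 (a*(t+1)+2) (t+1) (a*(t-1)+2) (t-1)
        hdv (hdXne _ (odd_even_add_one ht)) (hdXne _ (odd_even_sub_one ht))).1.mp hmem
      have htt : 1 ≤ t ∨ t ≤ -3 := by
        obtain ⟨k, rfl⟩ := ht
        omega
      rcases htt with h | h
      · have d1 := hdXpos (t+1) (by omega)
        have d2 := hdXpos (t-1) (by omega)
        nlinarith [mul_pos d1 d2]
      · have d1 := hdXneg (t+1) (by omega)
        have d2 := hdXneg (t-1) (by omega)
        nlinarith [mul_pos_of_neg_of_neg d1 d2]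
    · -- disjointness
      have hstep : ∀ t1 t2 : ℤ, Odd t1 → t1 ≠ -1 → Odd t2 → t2 ≠ -1 → t1 < t2 →
          childTerritory l a t1 ∩ childTerritory l a t2 = ∅ := by
        intro t1 t2 ho1 hn1 ho2 hn2 h12
        have hgap : t1 + 2 ≤ t2 := by
          obtain ⟨k1, rfl⟩ := ho1
          obtain ⟨k2, rfl⟩ := ho2
          omega
        rw [hchildEq t1 ho1, hchildEq t2 ho2]
        by_cases hmix : t1 ≤ -3 ∧ 1 ≤ t2
        · -- opposite signs: separator p/q
          have hmain : ∀ s1 s2 : ℤ, Even s1 → Even s2 → s1 ≤ -2 → 0 ≤ s2 →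
              (pairQ (cfFold l (a*s1+2, s1)) - pairQ (cfFold l (a,1))) *
              (pairQ (cfFold l (a*s2+2, s2)) - pairQ (cfFold l (a,1))) ≤ 0 := by
            intro s1 s2 he1 he2 hs1 hs2
            have key : (pairQ (cfFold l (a,1)) - pairQ (cfFold l (a*s1+2, s1))) *
                (pairQ (cfFold l (a,1)) - pairQ (cfFold l (a*s2+2, s2))) ≤ 0 := by
              simp only [hpairQ]
              refine (prodQ A B C D l.length hdet a 1 (a*s1+2) s1 (a*s2+2) s2
                hdv (hdXne _ he1) (hdXne _ he2)).2.mpr ?_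
              have d1 := hdXneg s1 hs1
              have d2 := hdXpos s2 hs2
              nlinarith [mul_pos (neg_pos.mpr d1) d2]
            nlinarith [key]
          refine Ioo_disjoint_sep _ _ _ _ (pairQ (cfFold l (a,1))) ?_ ?_ ?_ ?_
          · exact hmain (t1+1) (t2+1) (odd_even_add_one ho1) (odd_even_add_one ho2)
              (by omega) (by omega)
          · exact hmain (t1+1) (t2-1) (odd_even_add_one ho1) (odd_even_sub_one ho2)
              (by omega) (by omega)
          · exact hmain (t1-1) (t2+1) (odd_even_sub_one ho1) (odd_even_add_one ho2)
              (by omega) (by omega)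
          · exact hmain (t1-1) (t2-1) (odd_even_sub_one ho1) (odd_even_sub_one ho2)
              (by omega) (by omega)
        · -- same sign: separator is the endpoint e(t1+1)
          have hsame : (1 ≤ t1 ∧ 1 ≤ t2) ∨ (t1 ≤ -3 ∧ t2 ≤ -3) := by
            have h1s : 1 ≤ t1 ∨ t1 ≤ -3 := by
              obtain ⟨k, rfl⟩ := ho1
              omega
            have h2s : 1 ≤ t2 ∨ t2 ≤ -3 := by
              obtain ⟨k, rfl⟩ := ho2
              omega
            rcases h1s with h1s | h1s <;> rcases h2s with h2s | h2s
            · exact Or.inl ⟨h1s, h2s⟩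
            · omega
            · exact absurd ⟨h1s, h2s⟩ hmix
            · exact Or.inr ⟨h1s, h2s⟩
          have hdprod : ∀ s' : ℤ, Even s' → (t2 - 1 ≤ s') → s' ≤ t2 + 1 →
              0 < ((a*(t1-1)+2)*C + (t1-1)*D) * ((a*s'+2)*C + s'*D) := by
            intro s' he' hlo hhi
            rcases hsame with ⟨ha1, ha2⟩ | ⟨ha1, ha2⟩
            · exact mul_pos (hdXpos (t1-1) (by omega)) (hdXpos s' (by omega))
            · exact mul_pos_of_neg_of_neg (hdXneg (t1-1) (by omega)) (hdXneg s' (by omega))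
          have hmain2 : ∀ s' : ℤ, Even s' → (t2 - 1 ≤ s') → s' ≤ t2 + 1 →
              (pairQ (cfFold l (a*(t1-1)+2, t1-1)) - pairQ (cfFold l (a*(t1+1)+2, t1+1))) *
              (pairQ (cfFold l (a*s'+2, s')) - pairQ (cfFold l (a*(t1+1)+2, t1+1))) ≤ 0 := by
            intro s' he' hlo hhi
            have key : (pairQ (cfFold l (a*(t1+1)+2, t1+1)) - pairQ (cfFold l (a*(t1-1)+2, t1-1))) *
                (pairQ (cfFold l (a*(t1+1)+2, t1+1)) - pairQ (cfFold l (a*s'+2, s'))) ≤ 0 := by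
              simp only [hpairQ]
              refine (prodQ A B C D l.length hdet (a*(t1+1)+2) (t1+1) (a*(t1-1)+2) (t1-1)
                (a*s'+2) s' (hdXne _ (odd_even_add_one ho1)) (hdXne _ (odd_even_sub_one ho1))
                (hdXne _ he')).2.mpr ?_
              have hdp := hdprod s' he' hlo hhi
              have hge : 0 ≤ s' - t1 - 1 := by omega
              nlinarith [mul_nonneg hge hdp.le]
            nlinarith [key]
          refine Ioo_disjoint_sep _ _ _ _ (pairQ (cfFold l (a*(t1+1)+2, t1+1))) ?_ ?_ ?_ ?_
          · rw [sub_self, zero_mul]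
          · rw [sub_self, zero_mul]
          · exact hmain2 (t2+1) (odd_even_add_one ho2) (by omega) (by omega)
          · exact hmain2 (t2-1) (odd_even_sub_one ho2) (by omega) (by omega)
      rcases lt_or_gt_of_ne hne with h | h
      · exact hstep t t' ht ht1 ht' ht'1 h
      · rw [Set.inter_comm]
        exact hstep t' t ht' ht'1 ht ht1 h
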